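/- Let $(m, Q)$ be a pair with $m \in \widetilde{M} = M \oplus \mathbb{Z}$ and $Q \subset (\pi_M(m) = 0) \subset N_\mathbb{R}$ a lattice polytope such that for every $i \in \mathbb{N}$ with $P \cap (\varphi_m = i) \ne \emptyset$, the polytope $iQ$ is a Minkowski summand of $P \cap (\varphi_m = i)$ (a deformation pair of the lattice polytope $P$). Then there exist Laurent polynomials $f, g \in \mathbb{C}[N]$ with Newton polytopes $\Delta(f) = P$ and $\Delta(g) = Q$ such that $f$ is $(m,g)$-mutable. -/

import Mathlib

open Pointwise

/-- Laurent polynomials `ℂ[N]` in `n` variables, `N ≅ ℤⁿ`. -/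
abbrev Laurent (n : ℕ) := AddMonoidAlgebra ℂ (Fin n → ℤ)

/-- Embedding of the lattice `N = ℤⁿ` into `N_ℝ = ℝⁿ`. -/
def emb {n : ℕ} (v : Fin n → ℤ) : Fin n → ℝ := fun i => (v i : ℝ)

/-- Lattice pairing. -/
def pairZ {n : ℕ} (c v : Fin n → ℤ) : ℤ := ∑ i, c i * v i

/-- The affine function `φ_m` attached to `m ∈ M ⊕ ℤ`. -/
def phiAff {n : ℕ} (m : (Fin n → ℤ) × ℤ) (v : Fin n → ℤ) : ℤ := pairZ m.1 v + m.2

/-- The graded piece of a Laurent polynomial supported on the slice `(φ_m = i)`. -/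
noncomputable def gradedPiece {n : ℕ} (m : (Fin n → ℤ) × ℤ) (i : ℤ) (f : Laurent n) :
    Laurent n :=
  AddMonoidAlgebra.ofCoeff (Finsupp.filter (fun v => phiAff m v = i) f.coeff)

/-- The Newton polytope `Δ(f)` of a Laurent polynomial. -/
noncomputable def newton {n : ℕ} (f : Laurent n) : Set (Fin n → ℝ) :=
  convexHull ℝ (emb '' (f.coeff.support : Set (Fin n → ℤ)))

/-- `f` is `(m,g)`-mutable: `Δ(g) ⊆ (π_M(m) = 0)` and `g^i` divides the graded piece
`f_i` for every `i ≥ 0`. -/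
def IsMGMutable {n : ℕ} (f g : Laurent n) (m : (Fin n → ℤ) × ℤ) : Prop :=
  (∀ v ∈ g.coeff.support, pairZ m.1 v = 0) ∧ ∀ i : ℕ, g ^ i ∣ gradedPiece m (i : ℤ) f

/-- The real slice `P ∩ (φ_m = i)`. -/
def realSlice {n : ℕ} (P : Set (Fin n → ℝ)) (m : (Fin n → ℤ) × ℤ) (i : ℝ) :
    Set (Fin n → ℝ) :=
  {x ∈ P | (∑ j, (m.1 j : ℝ) * x j) + (m.2 : ℝ) = i}


open scoped NNReal

noncomputable section AuxNN

abbrev LA (n : ℕ) := AddMonoidAlgebra ℝ≥0 (Fin n → ℤ)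

def cHom : ℝ≥0 →+* ℂ := Complex.ofRealHom.comp NNReal.toRealHom

lemma cHom_inj : Function.Injective cHom := by
  intro a b h
  simpa [cHom, NNReal.coe_inj] using congrArg Complex.re h

def toC {n : ℕ} (F : LA n) : Laurent n :=
  AddMonoidAlgebra.ofCoeff (Finsupp.mapRange cHom (map_zero cHom) F.coeff)

lemma support_toC {n : ℕ} (F : LA n) : (toC F).coeff.support = F.coeff.support :=
  Finsupp.support_mapRange_of_injective (map_zero cHom) F.coeff cHom_inj

lemma toC_mul {n : ℕ} (F G : LA n) : toC (F * G) = toC F * toC G := by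
  exact AddMonoidAlgebra.map_mul cHom F G

lemma toC_one {n : ℕ} : toC (1 : LA n) = 1 := by
  exact AddMonoidAlgebra.map_one cHom

lemma toC_pow {n : ℕ} (F : LA n) (k : ℕ) : toC (F ^ k) = toC F ^ k := by
  induction k with
  | zero => simpa using toC_one
  | succ k ih => rw [pow_succ, toC_mul, ih, pow_succ]

end AuxNN

noncomputable section AuxSupp
open Finsupp

lemma nn_coeff_mul_le {n : ℕ} (F G : LA n) (a b : Fin n → ℤ)
    (ha : F.coeff a ≠ 0) (hb : G.coeff b ≠ 0) : F.coeff a * G.coeff b ≤ (F * G).coeff (a + b) := by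
  classical
  rw [AddMonoidAlgebra.coeff_mul]
  have h2 : F.coeff a * G.coeff b ≤ G.coeff.sum fun a₂ b₂ => if a + a₂ = a + b then F.coeff a * b₂ else 0 := by
    rw [Finsupp.sum]
    have := Finset.single_le_sum
      (f := fun a₂ => if a + a₂ = a + b then F.coeff a * G.coeff a₂ else 0)
      (fun i _ => zero_le) (Finsupp.mem_support_iff.2 hb)
    simpa using this
  refine h2.trans ?_
  rw [Finsupp.sum]
  exact Finset.single_le_sum
    (f := fun a₁ => G.coeff.sum fun a₂ b₂ => if a₁ + a₂ = a + b then F.coeff a₁ * b₂ else 0)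
    (fun i _ => zero_le) (Finsupp.mem_support_iff.2 ha)

lemma nn_mem_support_mul {n : ℕ} {F G : LA n} {a b : Fin n → ℤ}
    (ha : a ∈ F.coeff.support) (hb : b ∈ G.coeff.support) : a + b ∈ (F * G).coeff.support := by
  rw [Finsupp.mem_support_iff] at *
  intro h
  have := nn_coeff_mul_le F G a b ha hb
  rw [h, le_zero_iff] at this
  exact absurd this (mul_ne_zero ha hb)

def ind {n : ℕ} (s : Finset (Fin n → ℤ)) : LA n := ∑ v ∈ s, AddMonoidAlgebra.single v 1

lemma ind_apply {n : ℕ} (s : Finset (Fin n → ℤ)) (u : Fin n → ℤ) :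
    (ind s).coeff u = if u ∈ s then 1 else 0 := by
  classical
  rw [ind, AddMonoidAlgebra.coeff_sum, Finsupp.finset_sum_apply]
  simp only [AddMonoidAlgebra.coeff_single, Finsupp.single_apply]
  rw [Finset.sum_ite_eq' s u (fun _ => (1:ℝ≥0))]

lemma support_ind {n : ℕ} (s : Finset (Fin n → ℤ)) : (ind s).coeff.support = s := by
  classical
  ext u
  rw [Finsupp.mem_support_iff, ind_apply]
  split <;> simp_all

end AuxSupp

section ExtremeAux
variable {E : Type*} [AddCommGroup E] [Module ℝ E]

lemma extreme_of_subset {s t : Set E} {v : E} (hts : t ⊆ s) (hvt : v ∈ t)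
    (hv : v ∈ s.extremePoints ℝ) : v ∈ t.extremePoints ℝ :=
  ⟨hvt, fun x₁ h₁ x₂ h₂ hseg => hv.2 (hts h₁) (hts h₂) hseg⟩

lemma extreme_add_left {A B : Set E} {a b : E}
    (hv : a + b ∈ (A + B).extremePoints ℝ) (ha : a ∈ A) (hb : b ∈ B) :
    a ∈ A.extremePoints ℝ := by
  refine ⟨ha, fun x₁ h₁ x₂ h₂ hseg => ?_⟩
  obtain ⟨c, d, hc, hd, hcd, hsum⟩ := hseg
  have hseg2 : a + b ∈ openSegment ℝ (x₁ + b) (x₂ + b) := by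
    refine ⟨c, d, hc, hd, hcd, ?_⟩
    rw [smul_add, smul_add]
    have : c • x₁ + d • x₂ = a := hsum
    rw [show c • x₁ + c • b + (d • x₂ + d • b) = (c • x₁ + d • x₂) + (c + d) • b by
      rw [add_smul]; abel, this, hcd, one_smul]
  have := hv.2 (Set.add_mem_add h₁ hb) (Set.add_mem_add h₂ hb) hseg2
  exact add_right_cancel this

lemma extreme_smul_set {s : Set E} {c : ℝ} (hc : c ≠ 0) {a : E}
    (ha : a ∈ (c • s).extremePoints ℝ) : ∃ q ∈ s.extremePoints ℝ, a = c • q := by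
  obtain ⟨q, hq, rfl⟩ := ha.1
  refine ⟨q, ⟨hq, fun x₁ h₁ x₂ h₂ hseg => ?_⟩, rfl⟩
  obtain ⟨t₁, t₂, ht₁, ht₂, ht, hsum⟩ := hseg
  have hseg2 : c • q ∈ openSegment ℝ (c • x₁) (c • x₂) := by
    refine ⟨t₁, t₂, ht₁, ht₂, ht, ?_⟩
    rw [smul_comm t₁ c, smul_comm t₂ c, ← smul_add, hsum]
  have := ha.2 (Set.smul_mem_smul_set h₁) (Set.smul_mem_smul_set h₂) hseg2
  have inj : Function.Injective (fun x : E => c • x) := smul_right_injective E hc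
  exact inj this

end ExtremeAux


section BasicLemmas

lemma emb_add {n : ℕ} (a b : Fin n → ℤ) : emb (a + b) = emb a + emb b := by
  funext j; simp [emb]

lemma emb_sub {n : ℕ} (a b : Fin n → ℤ) : emb (a - b) = emb a - emb b := by
  funext j; simp [emb]

lemma emb_zero {n : ℕ} : emb (0 : Fin n → ℤ) = 0 := by funext j; simp [emb]

lemma emb_nsmul {n : ℕ} (k : ℕ) (w : Fin n → ℤ) : emb (k • w) = (k : ℝ) • emb w := by
  funext j; simp [emb]

lemma pairZ_add {n : ℕ} (c a b : Fin n → ℤ) :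
    pairZ c (a + b) = pairZ c a + pairZ c b := by
  simp [pairZ, mul_add, Finset.sum_add_distrib]

lemma pairZ_zero {n : ℕ} (c : Fin n → ℤ) : pairZ c 0 = 0 := by simp [pairZ]

lemma pairZ_sub_nsmul {n : ℕ} (c v w : Fin n → ℤ) (k : ℕ) :
    pairZ c (v - k • w) = pairZ c v - (k : ℤ) * pairZ c w := by
  simp only [pairZ, Finset.mul_sum]
  rw [← Finset.sum_sub_distrib]
  congr 1; funext j
  simp only [Pi.sub_apply, Pi.smul_apply, smul_eq_mul]
  push_cast
  ring

lemma sum_emb {n : ℕ} (c v : Fin n → ℤ) :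
    ∑ j, (c j : ℝ) * emb v j = (pairZ c v : ℝ) := by
  simp [pairZ, emb]

end BasicLemmas

theorem stmt14 (n : ℕ) (m : (Fin n → ℤ) × ℤ)
    (VP VQ : Finset (Fin n → ℤ)) (hVP : VP.Nonempty) (hVQ : VQ.Nonempty)
    (hQhyp : ∀ w ∈ VQ, pairZ m.1 w = 0)
    (hdef : ∀ i : ℕ,
      (realSlice (convexHull ℝ (emb '' (VP : Set (Fin n → ℤ)))) m (i : ℝ)).Nonempty →
      ∃ R : Set (Fin n → ℝ), R.Nonempty ∧
        realSlice (convexHull ℝ (emb '' (VP : Set (Fin n → ℤ)))) m (i : ℝ)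
          = (i : ℝ) • (convexHull ℝ (emb '' (VQ : Set (Fin n → ℤ)))) + R) :
    ∃ f g : Laurent n,
      newton f = convexHull ℝ (emb '' (VP : Set (Fin n → ℤ))) ∧
      newton g = convexHull ℝ (emb '' (VQ : Set (Fin n → ℤ))) ∧
      IsMGMutable f g m := by
  classical
  set P := convexHull ℝ (emb '' (VP : Set (Fin n → ℤ))) with hPdef
  set Qs := convexHull ℝ (emb '' (VQ : Set (Fin n → ℤ))) with hQdef
  have hQsne : Qs.Nonempty := by
    obtain ⟨w, hw⟩ := hVQ
    exact ⟨emb w, subset_convexHull ℝ _ ⟨w, hw, rfl⟩⟩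
  have hQconv : Convex ℝ Qs := convex_convexHull ℝ _
  have hPconv : Convex ℝ P := convex_convexHull ℝ _
  -- Q lies in the hyperplane
  have hQplane : ∀ x ∈ Qs, ∑ j, (m.1 j : ℝ) * x j = 0 := by
    intro x hx
    have hconv : Convex ℝ {x : Fin n → ℝ | ∑ j, (m.1 j : ℝ) * x j = 0} := by
      intro y hy z hz a b ha hb hab
      simp only [Set.mem_setOf_eq] at *
      have : ∑ j, (m.1 j : ℝ) * (a * y j + b * z j)
          = a * (∑ j, (m.1 j : ℝ) * y j) + b * (∑ j, (m.1 j : ℝ) * z j) := by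
        rw [Finset.mul_sum, Finset.mul_sum, ← Finset.sum_add_distrib]
        congr 1; funext j; ring
      simpa [Pi.add_apply, Pi.smul_apply, smul_eq_mul, this, hy, hz] using this.trans (by rw [hy, hz]; ring)
    have hsub : Qs ⊆ {x : Fin n → ℝ | ∑ j, (m.1 j : ℝ) * x j = 0} := by
      rw [hQdef]
      apply convexHull_min ?_ hconv
      rintro y ⟨w, hw, rfl⟩
      have := hQhyp w hw
      simp only [Set.mem_setOf_eq, sum_emb]
      exact_mod_cast congrArg (fun z : ℤ => (z : ℝ)) this
    exact hsub hx
  have hQsmulplane : ∀ (r : ℝ), ∀ x ∈ r • Qs, ∑ j, (m.1 j : ℝ) * x j = 0 := by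
    rintro r x ⟨q, hq, rfl⟩
    have := hQplane q hq
    calc ∑ j, (m.1 j : ℝ) * (r • q) j = r * ∑ j, (m.1 j : ℝ) * q j := by
          rw [Finset.mul_sum]; congr 1; funext j; simp [Pi.smul_apply]; ring
      _ = 0 := by rw [this, mul_zero]
  -- the bound N
  set Nb : ℕ := (VP.sup fun v => (phiAff m v).toNat) + 1 with hNdef
  have hNlt : ∀ v ∈ VP, phiAff m v < (Nb : ℤ) := by
    intro v hv
    have h1 : (phiAff m v).toNat ≤ VP.sup fun v => (phiAff m v).toNat :=
      Finset.le_sup (f := fun v => (phiAff m v).toNat) hv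
    have h2 : phiAff m v ≤ ((phiAff m v).toNat : ℤ) := Int.self_le_toNat _
    have : ((phiAff m v).toNat : ℤ) < (Nb : ℤ) := by
      rw [hNdef]; exact_mod_cast Nat.lt_succ_of_le h1
    omega
  -- the candidate supports
  set Hset : ℕ → Finset (Fin n → ℤ) := fun i =>
    (Finset.image₂ (fun v w => v - i • w)
        (VP.filter fun v => phiAff m v = (i : ℤ)) VQ).filter
      (fun u => ∀ x ∈ (i : ℝ) • Qs, emb u + x ∈ P) with hHsetdef
  set G : LA n := ind VQ with hGdef
  set Hi : ℕ → LA n := fun i => ind (Hset i) with hHidef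
  set Fneg : LA n := ind (VP.filter fun v => phiAff m v < 0) with hFnegdef
  set F : LA n := Fneg + ∑ i ∈ Finset.range Nb, G ^ i * Hi i with hFdef
  have hsuppG : G.coeff.support = VQ := support_ind VQ
  -- support of powers of G
  have hGpow : ∀ i : ℕ, ∀ a ∈ (G ^ i).coeff.support,
      pairZ m.1 a = 0 ∧ emb a ∈ (i : ℝ) • Qs := by
    intro i
    induction i with
    | zero =>
      intro a ha
      rw [pow_zero] at ha
      have h1 : (1 : LA n).coeff = Finsupp.single 0 1 := rfl
      rw [h1] at ha
      have := Finsupp.support_single_subset ha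
      rw [Finset.mem_singleton] at this
      subst this
      refine ⟨pairZ_zero _, ?_⟩
      rw [emb_zero, Nat.cast_zero, Set.zero_smul_set hQsne]
      exact rfl
    | succ i ih =>
      intro a ha
      rw [pow_succ] at ha
      obtain ⟨b, hb, c, hc, rfl⟩ := Finset.mem_add.1 (AddMonoidAlgebra.support_coeff_mul_subset _ _ ha)
      obtain ⟨hb1, hb2⟩ := ih b hb
      rw [hsuppG] at hc
      have hc1 : pairZ m.1 c = 0 := hQhyp c hc
      have hc2 : emb c ∈ Qs := subset_convexHull ℝ _ ⟨c, hc, rfl⟩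
      refine ⟨by rw [pairZ_add, hb1, hc1, add_zero], ?_⟩
      have hsmul : ((i : ℝ) + 1) • Qs = (i : ℝ) • Qs + (1 : ℝ) • Qs :=
        hQconv.add_smul (by positivity) zero_le_one
      rw [emb_add, Nat.cast_succ, hsmul]
      exact Set.add_mem_add hb2 (by rwa [one_smul])
  have hGpowmem : ∀ w ∈ VQ, ∀ i : ℕ, (i • w) ∈ (G ^ i).coeff.support := by
    intro w hw i
    induction i with
    | zero =>
      rw [pow_zero, zero_smul]
      have h1 : (1 : LA n).coeff = Finsupp.single 0 1 := rfl
      rw [h1, Finsupp.mem_support_iff, Finsupp.single_apply]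
      simp
    | succ i ih =>
      rw [pow_succ, succ_nsmul]
      exact nn_mem_support_mul ih (hsuppG ▸ hw)
  -- properties of Hset
  have hHsetmem : ∀ i : ℕ, ∀ u ∈ Hset i,
      phiAff m u = (i : ℤ) ∧ ∀ x ∈ (i : ℝ) • Qs, emb u + x ∈ P := by
    intro i u hu
    rw [hHsetdef] at hu
    obtain ⟨hu1, hu2⟩ := Finset.mem_filter.1 hu
    obtain ⟨v, hv, w, hw, rfl⟩ := Finset.mem_image₂.1 hu1
    obtain ⟨hvVP, hvphi⟩ := Finset.mem_filter.1 hv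
    refine ⟨?_, hu2⟩
    have := pairZ_sub_nsmul m.1 v w i
    rw [hQhyp w hw, mul_zero, sub_zero] at this
    unfold phiAff at *
    omega
  -- slice support of the pieces
  have hFisupp : ∀ i : ℕ, ∀ u ∈ (G ^ i * Hi i).coeff.support, phiAff m u = (i : ℤ) := by
    intro i u hu
    obtain ⟨a, ha, b, hb, rfl⟩ := Finset.mem_add.1 (AddMonoidAlgebra.support_coeff_mul_subset _ _ hu)
    have h1 := (hGpow i a ha).1
    rw [hHidef, support_ind] at hb
    have h2 := (hHsetmem i b hb).1
    unfold phiAff at *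
    rw [pairZ_add]
    omega
  have hHizero : ∀ i : ℕ, Nb ≤ i → Hi i = 0 := by
    intro i hi
    have hempt : Hset i = ∅ := by
      rw [hHsetdef]
      have : (VP.filter fun v => phiAff m v = (i : ℤ)) = ∅ := by
        rw [Finset.filter_eq_empty_iff]
        intro v hv hphi
        have := hNlt v hv
        rw [hphi] at this
        exact absurd this (by exact_mod_cast Nat.not_lt.2 hi)
      simp [this]
    show ind (Hset i) = 0
    rw [hempt]
    simp [ind]
  -- graded pieces
  have hgraded : ∀ k : ℕ, gradedPiece m (k : ℤ) (toC F) = toC (G ^ k * Hi k) := by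
    intro k
    have hcomm : ∀ (A : LA n),
        Finsupp.filter (fun v => phiAff m v = (k : ℤ)) (toC A).coeff
          = (toC (AddMonoidAlgebra.ofCoeff
              (Finsupp.filter (fun v => phiAff m v = (k : ℤ)) A.coeff))).coeff := by
      intro A
      ext u
      simp only [toC, Finsupp.filter_apply, Finsupp.mapRange_apply, apply_ite cHom, map_zero,
        AddMonoidAlgebra.coeff_ofCoeff]
    rw [gradedPiece, hcomm, AddMonoidAlgebra.ofCoeff_coeff]
    congr 1
    apply AddMonoidAlgebra.coeff_injective
    rw [AddMonoidAlgebra.coeff_ofCoeff, hFdef, AddMonoidAlgebra.coeff_add, Finsupp.filter_add]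
    have hsum : Finsupp.filter (fun v => phiAff m v = (k : ℤ))
        (∑ i ∈ Finset.range Nb, G ^ i * Hi i).coeff
        = ∑ i ∈ Finset.range Nb,
            Finsupp.filter (fun v => phiAff m v = (k : ℤ)) (G ^ i * Hi i).coeff := by
      rw [AddMonoidAlgebra.coeff_sum]
      exact map_sum (Finsupp.filterAddHom _) _ _
    have hneg : Finsupp.filter (fun v => phiAff m v = (k : ℤ)) Fneg.coeff = 0 := by
      rw [Finsupp.filter_eq_zero_iff]
      intro x hx
      rw [hFnegdef, ind_apply, if_neg]
      intro hmem
      have := (Finset.mem_filter.1 hmem).2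
      omega
    have hpieces : ∀ i ∈ Finset.range Nb,
        Finsupp.filter (fun v => phiAff m v = (k : ℤ)) (G ^ i * Hi i).coeff
          = if i = k then (G ^ i * Hi i).coeff else 0 := by
      intro i _
      by_cases hik : i = k
      · subst hik
        rw [if_pos rfl, Finsupp.filter_eq_self_iff]
        intro x hx
        exact hFisupp i x (Finsupp.mem_support_iff.2 hx)
      · rw [if_neg hik, Finsupp.filter_eq_zero_iff]
        intro x hx
        by_contra hne
        have := hFisupp i x (Finsupp.mem_support_iff.2 hne)
        rw [hx] at this
        exact hik (by exact_mod_cast this.symm)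
    rw [hsum, Finset.sum_congr rfl hpieces, Finset.sum_ite_eq' (Finset.range Nb) k]
    by_cases hk : k ∈ Finset.range Nb
    · rw [if_pos hk, hneg, zero_add]
    · rw [if_neg hk, hneg, zero_add]
      have : Hi k = 0 := hHizero k (Nat.not_lt.1 (by simpa [Finset.mem_range] using hk))
      rw [this, mul_zero, AddMonoidAlgebra.coeff_zero]
  -- coefficient bounds
  have hle1 : ∀ u, Fneg.coeff u ≤ F.coeff u := by
    intro u
    rw [hFdef, AddMonoidAlgebra.coeff_add, Finsupp.add_apply]
    exact le_add_of_le_of_nonneg le_rfl zero_le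
  have hle2 : ∀ i ∈ Finset.range Nb, ∀ u, (G ^ i * Hi i).coeff u ≤ F.coeff u := by
    intro i hi u
    rw [hFdef, AddMonoidAlgebra.coeff_add, Finsupp.add_apply, AddMonoidAlgebra.coeff_sum,
      Finsupp.finset_sum_apply]
    refine le_add_of_nonneg_of_le zero_le ?_
    exact Finset.single_le_sum (f := fun i => (G ^ i * Hi i).coeff u) (fun j _ => zero_le) hi
  refine ⟨toC F, toC G, ?_, ?_, ?_, ?_⟩
  · -- newton f = P
    apply subset_antisymm
    · rw [newton]
      apply convexHull_min ?_ hPconv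
      rintro x ⟨u, hu, rfl⟩
      have hu' : u ∈ F.coeff.support := by rwa [← support_toC F]
      rw [hFdef, AddMonoidAlgebra.coeff_add] at hu'
      rcases Finset.mem_union.1 (Finsupp.support_add hu') with h | h
      · rw [hFnegdef, support_ind] at h
        exact subset_convexHull ℝ _ ⟨u, Finset.filter_subset _ _ h, rfl⟩
      · rw [AddMonoidAlgebra.coeff_sum] at h
        obtain ⟨i, hi, hmem⟩ := Finsupp.mem_support_finset_sum u h
        obtain ⟨a, ha, b, hb, rfl⟩ :=
          Finset.mem_add.1 (AddMonoidAlgebra.support_coeff_mul_subset _ _ hmem)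
        have h1 := (hGpow i a ha).2
        rw [hHidef, support_ind] at hb
        have h2 := (hHsetmem i b hb).2 (emb a) h1
        rw [emb_add, add_comm]
        exact h2
    · -- P ⊆ newton f
      have hfin : (emb '' (VP : Set (Fin n → ℤ))).Finite := VP.finite_toSet.image emb
      have hPcomp : IsCompact P := hfin.isCompact_convexHull ℝ
      have hclosedNewton : IsClosed (newton (toC F)) :=
        (((toC F).coeff.support.finite_toSet.image emb).isCompact_convexHull ℝ).isClosed
      have hext : P.extremePoints ℝ ⊆ emb '' ((toC F).coeff.support : Set (Fin n → ℤ)) := by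
        intro v hv
        have hvP : v ∈ emb '' (VP : Set (Fin n → ℤ)) := extremePoints_convexHull_subset hv
        obtain ⟨v₀, hv₀VP, rfl⟩ := hvP
        suffices hsupp : v₀ ∈ F.coeff.support by
          rw [support_toC]
          exact Set.mem_image_of_mem emb hsupp
        by_cases hneg : phiAff m v₀ < 0
        · have h1 : Fneg.coeff v₀ = 1 := by
            rw [hFnegdef, ind_apply, if_pos (Finset.mem_filter.2 ⟨hv₀VP, hneg⟩)]
          rw [Finsupp.mem_support_iff]
          intro h0
          have := hle1 v₀
          rw [h0, h1, le_zero_iff] at this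
          exact one_ne_zero this
        · push_neg at hneg
          set k : ℕ := (phiAff m v₀).toNat with hkdef
          have hk : (k : ℤ) = phiAff m v₀ := Int.toNat_of_nonneg hneg
          have hvslice : emb v₀ ∈ realSlice P m (k : ℝ) := by
            refine ⟨extremePoints_subset hv, ?_⟩
            rw [sum_emb]
            have : ((pairZ m.1 v₀ + m.2 : ℤ) : ℝ) = ((k : ℤ) : ℝ) := by
              rw [hk]; rfl
            push_cast at this ⊢
            linarith
          obtain ⟨R, hRne, hsliceEq⟩ := hdef k ⟨emb v₀, hvslice⟩
          have hsliceP : realSlice P m (k : ℝ) ⊆ P := fun x hx => hx.1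
          have hvext : emb v₀ ∈ (realSlice P m (k : ℝ)).extremePoints ℝ :=
            extreme_of_subset hsliceP hvslice hv
          rw [hsliceEq] at hvext hvslice
          obtain ⟨a, haQ, b, hbR, hab0⟩ := hvslice
          have hab : a + b = emb v₀ := hab0
          have hvext' : a + b ∈ ((k : ℝ) • Qs + R).extremePoints ℝ := by rwa [hab]
          have haext : a ∈ ((k : ℝ) • Qs).extremePoints ℝ :=
            extreme_add_left hvext' haQ hbR
          obtain ⟨w, hwVQ, hawQ⟩ : ∃ w ∈ VQ, a = (k : ℝ) • emb w := by
            rcases Nat.eq_zero_or_pos k with hk0 | hkpos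
            · obtain ⟨w, hw⟩ := hVQ
              refine ⟨w, hw, ?_⟩
              have hzero : (k : ℝ) • Qs = 0 := by
                rw [hk0, Nat.cast_zero, Set.zero_smul_set hQsne]
              rw [hzero, Set.mem_zero] at haQ
              rw [haQ, hk0]
              simp
            · have hkne : (k : ℝ) ≠ 0 := by positivity
              obtain ⟨q, hqext, haq⟩ := extreme_smul_set hkne haext
              have hqVQ : q ∈ emb '' (VQ : Set (Fin n → ℤ)) :=
                extremePoints_convexHull_subset hqext
              obtain ⟨w, hw, rfl⟩ := hqVQ
              exact ⟨w, hw, haq⟩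
          set u₀ : Fin n → ℤ := v₀ - k • w with hu₀def
          have hembu₀ : emb u₀ = b := by
            rw [hu₀def, emb_sub, emb_nsmul, ← hawQ]
            rw [show b = emb v₀ - a by rw [← hab, add_sub_cancel_left]]
          have hu₀Hset : u₀ ∈ Hset k := by
            rw [hHsetdef]
            refine Finset.mem_filter.2 ⟨?_, ?_⟩
            · exact Finset.mem_image₂.2 ⟨v₀, Finset.mem_filter.2 ⟨hv₀VP, hk.symm⟩, w, hwVQ, rfl⟩
            · intro x hx
              rw [hembu₀]
              have : x + b ∈ (k : ℝ) • Qs + R := Set.add_mem_add hx hbR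
              rw [← hsliceEq] at this
              rw [add_comm]
              exact hsliceP this
          have hv₀eq : v₀ = k • w + u₀ := by rw [hu₀def]; funext j; simp
          have hmem : v₀ ∈ (G ^ k * Hi k).coeff.support := by
            rw [hv₀eq]
            refine nn_mem_support_mul (hGpowmem w hwVQ k) ?_
            rw [hHidef, support_ind]
            exact hu₀Hset
          have hkN : k ∈ Finset.range Nb := by
            rw [Finset.mem_range]
            have := hNlt v₀ hv₀VP
            omega
          rw [Finsupp.mem_support_iff]
          intro h0
          have hle := hle2 k hkN v₀
          rw [h0, le_zero_iff] at hle
          exact Finsupp.mem_support_iff.1 hmem hle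
      calc P = closure (convexHull ℝ (P.extremePoints ℝ)) :=
            (closure_convexHull_extremePoints hPcomp hPconv).symm
        _ ⊆ closure (newton (toC F)) := closure_mono (convexHull_mono hext)
        _ = newton (toC F) := hclosedNewton.closure_eq
  · -- newton g = Qs
    rw [newton, support_toC, hsuppG, hQdef]
  · -- hyperplane condition
    intro v hv
    rw [support_toC, hsuppG] at hv
    exact hQhyp v hv
  · -- divisibility
    intro k
    rw [hgraded k, toC_mul, toC_pow]
    exact dvd_mul_right _ _
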